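/- Let $(F,G)$ be a pair of smooth compactly supported functions on a symplectic manifold $M$. For $s \geq 0$ let $\mathcal{K}_s$ be the set of pairs $(H,K)$ of smooth compactly supported functions with $\|\{H,K\}\|_\infty \leq s$, and let $\rho_{F,G}(s) = \inf_{(H,K) \in \mathcal{K}_s}(\|F-H\|_\infty + \|G-K\|_\infty)$ be the profile function. Then the function $s \mapsto s\,\rho_{F,G}(s)$ is Lipschitz on $(0, +\infty)$ with Lipschitz constant $3\min(\|F\|_\infty, \|G\|_\infty)$. In particular $\rho_{F,G}$ is continuous on $(0,+\infty)$. -/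

import Mathlib

open Set

/-- The sup-norm (uniform norm) `‖f‖_∞ = sup_{x ∈ M} |f(x)|` of a function. -/
noncomputable def supNorm {M : Type*} (f : M → ℝ) : ℝ := ⨆ x, |f x|

/-- An abstract model of a symplectic manifold `M`, recording the predicate of being a
smooth function on `M` and the Poisson bracket `{·,·}` on smooth functions, together with
its basic algebraic properties (ℝ-bilinearity, antisymmetry, and the Leibniz rule). -/
structure PoissonManifold (M : Type*) [TopologicalSpace M] where
  /-- `IsSmooth f` means `f ∈ C^∞(M)`. -/
  IsSmooth : (M → ℝ) → Prop
  /-- The Poisson bracket `{f, g}` associated to the symplectic form. -/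
  bracket : (M → ℝ) → (M → ℝ) → M → ℝ
  isSmooth_continuous : ∀ {f}, IsSmooth f → Continuous f
  isSmooth_const : ∀ c : ℝ, IsSmooth (fun _ => c)
  isSmooth_add : ∀ {f g}, IsSmooth f → IsSmooth g → IsSmooth (f + g)
  isSmooth_mul : ∀ {f g}, IsSmooth f → IsSmooth g → IsSmooth (f * g)
  isSmooth_smul : ∀ (c : ℝ) {f}, IsSmooth f → IsSmooth (c • f)
  isSmooth_bracket : ∀ {f g}, IsSmooth f → IsSmooth g → IsSmooth (bracket f g)
  bracket_add_left : ∀ f g h, bracket (f + g) h = bracket f h + bracket g h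
  bracket_smul_left : ∀ (c : ℝ) f g, bracket (c • f) g = c • bracket f g
  bracket_antisymm : ∀ f g, bracket f g = - bracket g f
  bracket_leibniz : ∀ f g h, bracket (f * g) h = f * bracket g h + g * bracket f h

/-- The set `𝒦_s` of pairs of smooth compactly supported functions `(H,K)` with
`‖{H,K}‖_∞ ≤ s`, as a predicate. -/
def inKs {M : Type*} [TopologicalSpace M] (P : PoissonManifold M) (s : ℝ)
    (H K : M → ℝ) : Prop :=
  P.IsSmooth H ∧ HasCompactSupport H ∧ P.IsSmooth K ∧ HasCompactSupport K ∧
    supNorm (P.bracket H K) ≤ s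

/-- The profile function `ρ_{F,G}(s) = dist((F,G), 𝒦_s)` in the uniform distance
`d((F,G),(H,K)) = ‖F-H‖_∞ + ‖G-K‖_∞`. -/
noncomputable def profileFn {M : Type*} [TopologicalSpace M] (P : PoissonManifold M)
    (F G : M → ℝ) (s : ℝ) : ℝ :=
  sInf {d : ℝ | ∃ H K : M → ℝ, inKs P s H K ∧ d = supNorm (F - H) + supNorm (G - K)}

section Aux

set_option linter.unusedSectionVars false
set_option linter.unusedVariables false

variable {M : Type*} [TopologicalSpace M]

lemma supNorm_nonneg (f : M → ℝ) : 0 ≤ supNorm f :=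
  Real.iSup_nonneg fun x => abs_nonneg _

lemma bdd_of_cc {f : M → ℝ} (hf : Continuous f) (hc : HasCompactSupport f) :
    BddAbove (Set.range fun x => |f x|) := by
  obtain ⟨C, hC⟩ := hf.bounded_above_of_compact_support hc
  exact ⟨C, by rintro y ⟨x, rfl⟩; simpa [Real.norm_eq_abs] using hC x⟩

lemma le_supNorm {f : M → ℝ} (h : BddAbove (Set.range fun x => |f x|)) (x : M) :
    |f x| ≤ supNorm f := le_ciSup h x

lemma supNorm_le {f : M → ℝ} {C : ℝ} (hC : 0 ≤ C) (h : ∀ x, |f x| ≤ C) :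
    supNorm f ≤ C := Real.iSup_le h hC

lemma supNorm_add_le {f g : M → ℝ} (hf : BddAbove (Set.range fun x => |f x|))
    (hg : BddAbove (Set.range fun x => |g x|)) :
    supNorm (f + g) ≤ supNorm f + supNorm g := by
  refine supNorm_le (add_nonneg (supNorm_nonneg f) (supNorm_nonneg g)) fun x => ?_
  calc |(f + g) x| ≤ |f x| + |g x| := abs_add_le _ _
    _ ≤ _ := add_le_add (le_supNorm hf x) (le_supNorm hg x)

lemma supNorm_smul (c : ℝ) (f : M → ℝ) : supNorm (c • f) = |c| * supNorm f := by
  unfold supNorm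
  rw [Real.mul_iSup_of_nonneg (abs_nonneg c)]
  congr 1; ext x; simp [abs_mul]

lemma supNorm_neg (f : M → ℝ) : supNorm (-f) = supNorm f := by
  unfold supNorm; simp

lemma supNorm_zero : supNorm (0 : M → ℝ) = 0 := by
  have h := supNorm_smul (0 : ℝ) (0 : M → ℝ)
  simpa using h

lemma hcs_neg {f : M → ℝ} (hf : HasCompactSupport f) : HasCompactSupport (-f) := by
  apply hf.mono; simp

lemma hcs_sub {f g : M → ℝ} (hf : HasCompactSupport f) (hg : HasCompactSupport g) :
    HasCompactSupport (f - g) := by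
  rw [sub_eq_add_neg]
  exact hf.add (hcs_neg hg)

lemma hcs_smul (c : ℝ) {f : M → ℝ} (hf : HasCompactSupport f) :
    HasCompactSupport (c • f) := by
  apply hf.mono
  intro x hx
  simp only [Function.mem_support, Pi.smul_apply, smul_eq_mul] at hx ⊢
  exact fun h => hx (by rw [h, mul_zero])

lemma hcs_zero : HasCompactSupport (0 : M → ℝ) := by
  rw [hasCompactSupport_def]; simp

variable (P : PoissonManifold M) (F G : M → ℝ)

/-- The competitor set. -/
def profSet (s : ℝ) : Set ℝ :=
  {d : ℝ | ∃ H K : M → ℝ, inKs P s H K ∧ d = supNorm (F - H) + supNorm (G - K)}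

lemma profileFn_eq (s : ℝ) : profileFn P F G s = sInf (profSet P F G s) := rfl

lemma profSet_bddBelow (s : ℝ) : BddBelow (profSet P F G s) := by
  refine ⟨0, ?_⟩
  rintro d ⟨H, K, _, rfl⟩
  exact add_nonneg (supNorm_nonneg _) (supNorm_nonneg _)

lemma isSmooth_zero : P.IsSmooth (0 : M → ℝ) := P.isSmooth_const 0

lemma bracket_zero_left (K : M → ℝ) : P.bracket 0 K = 0 := by
  have h := P.bracket_smul_left 0 0 K
  simpa using h

lemma bracket_zero_right (H : M → ℝ) : P.bracket H 0 = 0 := by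
  rw [P.bracket_antisymm, bracket_zero_left]
  simp

lemma mem_profSet_left {s : ℝ} (hs : 0 ≤ s) (hG : P.IsSmooth G)
    (hGc : HasCompactSupport G) : supNorm F ∈ profSet P F G s := by
  refine ⟨0, G, ⟨isSmooth_zero P, hcs_zero, hG, hGc, ?_⟩, by simp [supNorm_zero]⟩
  rw [bracket_zero_left, supNorm_zero]; exact hs

lemma mem_profSet_right {s : ℝ} (hs : 0 ≤ s) (hF : P.IsSmooth F)
    (hFc : HasCompactSupport F) : supNorm G ∈ profSet P F G s := by
  refine ⟨F, 0, ⟨hF, hFc, isSmooth_zero P, hcs_zero, ?_⟩, by simp [supNorm_zero]⟩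
  rw [bracket_zero_right, supNorm_zero]; exact hs

lemma profileFn_nonneg (s : ℝ) : 0 ≤ profileFn P F G s :=
  Real.sInf_nonneg fun d ⟨H, K, _, hd⟩ => hd ▸ add_nonneg (supNorm_nonneg _) (supNorm_nonneg _)

lemma profileFn_le {s d : ℝ} (hd : d ∈ profSet P F G s) : profileFn P F G s ≤ d :=
  csInf_le (profSet_bddBelow P F G s) hd

lemma profileFn_le_left {s : ℝ} (hs : 0 ≤ s) (hG : P.IsSmooth G)
    (hGc : HasCompactSupport G) : profileFn P F G s ≤ supNorm F :=
  profileFn_le P F G (mem_profSet_left P F G hs hG hGc)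

lemma profileFn_antitone {s t : ℝ} (hst : s ≤ t) (hG : P.IsSmooth G)
    (hGc : HasCompactSupport G) (hs : 0 ≤ s) :
    profileFn P F G t ≤ profileFn P F G s := by
  refine csInf_le_csInf (profSet_bddBelow P F G t)
    ⟨supNorm F, mem_profSet_left P F G hs hG hGc⟩ ?_
  rintro d ⟨H, K, ⟨h1, h2, h3, h4, h5⟩, rfl⟩
  exact ⟨H, K, ⟨h1, h2, h3, h4, h5.trans hst⟩, rfl⟩

lemma profileFn_swap (s : ℝ) : profileFn P F G s = profileFn P G F s := by
  unfold profileFn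
  congr 1
  ext d
  constructor
  · rintro ⟨H, K, ⟨h1, h2, h3, h4, h5⟩, rfl⟩
    refine ⟨K, H, ⟨h3, h4, h1, h2, ?_⟩, add_comm _ _⟩
    rw [P.bracket_antisymm, supNorm_neg]; exact h5
  · rintro ⟨H, K, ⟨h1, h2, h3, h4, h5⟩, rfl⟩
    refine ⟨K, H, ⟨h3, h4, h1, h2, ?_⟩, add_comm _ _⟩
    rw [P.bracket_antisymm, supNorm_neg]; exact h5

/-- The key scaling estimate: for `0 < t ≤ s`,
`t·ρ(t) ≤ s·ρ(s) + 2‖F‖·(s - t)`. -/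
lemma profileFn_key (hF : P.IsSmooth F) (hFc : HasCompactSupport F)
    (hG : P.IsSmooth G) (hGc : HasCompactSupport G)
    {s t : ℝ} (ht : 0 < t) (hts : t ≤ s) :
    t * profileFn P F G t ≤ s * profileFn P F G s + 2 * supNorm F * (s - t) := by
  have hs : 0 < s := lt_of_lt_of_le ht hts
  refine le_of_forall_pos_le_add fun ε hε => ?_
  set δ := ε / s with hδdef
  have hδ : 0 < δ := div_pos hε hs
  have hδs : δ * s = ε := div_mul_cancel₀ ε hs.ne'
  -- pick a near-optimal competitor for parameter `s`
  obtain ⟨d, hdmem, hdlt⟩ := Real.lt_sInf_add_pos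
    (⟨supNorm F, mem_profSet_left P F G hs.le hG hGc⟩ : (profSet P F G s).Nonempty) hδ
  obtain ⟨H, K, ⟨hH, hHc, hK, hKc, hB⟩, rfl⟩ := hdmem
  rw [← profileFn_eq] at hdlt
  set lam := t / s with hlamdef
  have hlam0 : 0 < lam := div_pos ht hs
  have hlam1 : lam ≤ 1 := (div_le_one hs).2 hts
  have hlams : lam * s = t := div_mul_cancel₀ t hs.ne'
  -- continuity facts
  have hFcont := P.isSmooth_continuous hF
  have hHcont := P.isSmooth_continuous hH
  -- boundedness facts
  have bFH : BddAbove (Set.range fun x => |(F - H) x|) :=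
    bdd_of_cc (hFcont.sub hHcont) (hcs_sub hFc hHc)
  have bH : BddAbove (Set.range fun x => |H x|) := bdd_of_cc hHcont hHc
  have blH : BddAbove (Set.range fun x => |((1 - lam) • H) x|) :=
    bdd_of_cc (by exact hHcont.const_smul (1-lam) : Continuous ((1 - lam) • H)) (hcs_smul _ hHc)
  have bnFH : BddAbove (Set.range fun x => |(-(F - H)) x|) := by
    simpa [abs_sub_comm] using bFH
  have bF : BddAbove (Set.range fun x => |F x|) := bdd_of_cc hFcont hFc
  -- the rescaled competitor belongs to `profSet t`
  have hmem : (supNorm (F - lam • H) + supNorm (G - K)) ∈ profSet P F G t := by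
    refine ⟨lam • H, K, ⟨P.isSmooth_smul lam hH, hcs_smul _ hHc, hK, hKc, ?_⟩, rfl⟩
    rw [P.bracket_smul_left, supNorm_smul, abs_of_pos hlam0]
    calc lam * supNorm (P.bracket H K) ≤ lam * s :=
          mul_le_mul_of_nonneg_left hB hlam0.le
      _ = t := hlams
  -- estimate `‖F - λ•H‖ ≤ ‖F - H‖ + (1-λ)‖H‖`
  have hsplit : F - lam • H = (F - H) + ((1 - lam) • H) := by
    ext x; simp [Pi.smul_apply, smul_eq_mul]; ring
  have hb1 : supNorm (F - lam • H) ≤ supNorm (F - H) + (1 - lam) * supNorm H := by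
    rw [hsplit]
    refine (supNorm_add_le bFH blH).trans ?_
    rw [supNorm_smul, abs_of_nonneg (by linarith : (0:ℝ) ≤ 1 - lam)]
  -- estimate `‖H‖ ≤ ‖F‖ + ‖F - H‖`
  have hHbound : supNorm H ≤ supNorm F + supNorm (F - H) := by
    have hHeq : H = F + (-(F - H)) := by ext x; simp
    calc supNorm H = supNorm (F + (-(F - H))) := by rw [← hHeq]
      _ ≤ supNorm F + supNorm (-(F - H)) := supNorm_add_le bF bnFH
      _ = supNorm F + supNorm (F - H) := by rw [supNorm_neg]
  -- abbreviations
  set ρs := profileFn P F G s with hρs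
  set ρt := profileFn P F G t with hρt
  set a := supNorm (F - H) with ha
  set b := supNorm (G - K) with hb
  set h := supNorm H with hh
  set nF := supNorm F with hnF
  have hρtle : ρt ≤ (a + (1 - lam) * h) + b :=
    (profileFn_le P F G hmem).trans (add_le_add hb1 (le_refl b))
  have hρsle : ρs ≤ nF := profileFn_le_left P F G hs.le hG hGc
  have hρs0 : 0 ≤ ρs := profileFn_nonneg P F G s
  have hρt0 : 0 ≤ ρt := profileFn_nonneg P F G t
  have ha0 : 0 ≤ a := supNorm_nonneg _
  have hb0 : 0 ≤ b := supNorm_nonneg _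
  have hh0 : 0 ≤ h := supNorm_nonneg _
  have hnF0 : 0 ≤ nF := supNorm_nonneg _
  -- `t(1-λ) ≤ s - t`
  have e1 : t * (1 - lam) ≤ s - t := by
    have e2 : t * (1 - lam) = lam * (s - t) := by
      have : t = lam * s := hlams.symm
      nlinarith [hlams]
    rw [e2]
    nlinarith [hlam1, sub_nonneg.2 hts]
  -- `h ≤ 2 nF + δ`
  have hhb2 : h ≤ 2 * nF + δ := by
    have : a ≤ ρs + δ := by linarith [hdlt, hb0]
    linarith [hHbound, hρsle]
  -- final computation
  have step1 : t * ρt ≤ t * (a + b) + (t * (1 - lam)) * h := by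
    calc t * ρt ≤ t * ((a + (1 - lam) * h) + b) :=
          mul_le_mul_of_nonneg_left hρtle ht.le
      _ = t * (a + b) + (t * (1 - lam)) * h := by ring
  have step2 : (t * (1 - lam)) * h ≤ (s - t) * h := mul_le_mul_of_nonneg_right e1 hh0
  have step3 : (s - t) * h ≤ (s - t) * (2 * nF + δ) :=
    mul_le_mul_of_nonneg_left hhb2 (by linarith : (0:ℝ) ≤ s - t)
  have step4 : t * (a + b) ≤ t * (ρs + δ) := mul_le_mul_of_nonneg_left hdlt.le ht.le
  have step5 : t * ρs ≤ s * ρs := mul_le_mul_of_nonneg_right hts hρs0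
  nlinarith [step1, step2, step3, step4, step5, hδs, hδ.le, hts]

end Aux

/-- For smooth compactly supported `F, G`, the function
`s ↦ s·ρ_{F,G}(s)` is Lipschitz on `(0,∞)` with Lipschitz constant
`3·min(‖F‖_∞, ‖G‖_∞)`; in particular `ρ_{F,G}` is continuous on `(0,∞)`. -/
theorem profile_mul_id_lipschitz
    {M : Type*} [TopologicalSpace M] (P : PoissonManifold M)
    (F G : M → ℝ) (hF : P.IsSmooth F) (hFc : HasCompactSupport F)
    (hG : P.IsSmooth G) (hGc : HasCompactSupport G) :
    (∀ s ∈ Ioi (0:ℝ), ∀ t ∈ Ioi (0:ℝ),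
      |s * profileFn P F G s - t * profileFn P F G t|
        ≤ 3 * min (supNorm F) (supNorm G) * |s - t|)
    ∧ ContinuousOn (profileFn P F G) (Ioi (0:ℝ)) := by
  set m := min (supNorm F) (supNorm G) with hm
  have hm0 : 0 ≤ m := le_min (supNorm_nonneg F) (supNorm_nonneg G)
  have hmF : m ≤ supNorm F := min_le_left _ _
  have hmG : m ≤ supNorm G := min_le_right _ _
  -- key estimate with constant `2m` for ordered pairs
  have key : ∀ {s t : ℝ}, 0 < t → t ≤ s →
      t * profileFn P F G t ≤ s * profileFn P F G s + 2 * m * (s - t) := by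
    intro s t ht hts
    rcases le_total (supNorm F) (supNorm G) with hFG | hGF
    · have := profileFn_key P F G hF hFc hG hGc ht hts
      have hmE : m = supNorm F := min_eq_left hFG
      rw [hmE]; exact this
    · have := profileFn_key P G F hG hGc hF hFc ht hts
      rw [← profileFn_swap P F G t, ← profileFn_swap P F G s] at this
      have hmE : m = supNorm G := min_eq_right hGF
      rw [hmE]; exact this
  -- reverse estimate
  have rev : ∀ {s t : ℝ}, 0 < t → t ≤ s →
      s * profileFn P F G s ≤ t * profileFn P F G t + m * (s - t) := by
    intro s t ht hts
    have hs : 0 < s := lt_of_lt_of_le ht hts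
    have hmono : profileFn P F G s ≤ profileFn P F G t :=
      profileFn_antitone P F G hts hG hGc ht.le
    have hle : profileFn P F G t ≤ m := by
      rcases le_total (supNorm F) (supNorm G) with hFG | hGF
      · rw [hm, min_eq_left hFG]
        exact profileFn_le_left P F G ht.le hG hGc
      · rw [hm, min_eq_right hGF]
        rw [profileFn_swap P F G t]
        exact profileFn_le_left P G F ht.le hF hFc
    have h1 : s * profileFn P F G s ≤ s * profileFn P F G t :=
      mul_le_mul_of_nonneg_left hmono hs.le
    nlinarith [hle, sub_nonneg.2 hts, profileFn_nonneg P F G t]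
  -- the Lipschitz bound
  have lip : ∀ s ∈ Ioi (0:ℝ), ∀ t ∈ Ioi (0:ℝ),
      |s * profileFn P F G s - t * profileFn P F G t| ≤ 3 * m * |s - t| := by
    have main : ∀ {s t : ℝ}, 0 < t → t ≤ s →
        |s * profileFn P F G s - t * profileFn P F G t| ≤ 3 * m * |s - t| := by
      intro s t ht hts
      rw [abs_of_nonneg (sub_nonneg.2 hts), abs_le]
      constructor
      · have := key ht hts
        nlinarith [hm0, sub_nonneg.2 hts]
      · have := rev ht hts
        nlinarith [hm0, sub_nonneg.2 hts]
    intro s hsmem t htmem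
    rcases le_total t s with h | h
    · exact main htmem h
    · rw [abs_sub_comm, abs_sub_comm s t]
      exact main hsmem h
  refine ⟨lip, ?_⟩
  -- continuity of `s·ρ(s)` on `(0,∞)`
  have hcont1 : ContinuousOn (fun s => s * profileFn P F G s) (Ioi (0:ℝ)) := by
    have hL : LipschitzOnWith (Real.toNNReal (3 * m)) (fun s => s * profileFn P F G s)
        (Ioi (0:ℝ)) := by
      refine LipschitzOnWith.of_dist_le_mul fun x hx y hy => ?_
      rw [Real.dist_eq, Real.dist_eq]
      have := lip x hx y hy
      rwa [Real.coe_toNNReal _ (by positivity)]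
    exact hL.continuousOn
  -- continuity of `ρ`
  have heq : EqOn (profileFn P F G) (fun s => (s * profileFn P F G s) / s) (Ioi (0:ℝ)) := by
    intro s hs
    have hs0 : s ≠ 0 := ne_of_gt hs
    field_simp
  refine ContinuousOn.congr ?_ heq
  exact hcont1.div continuousOn_id fun x hx => ne_of_gt hx
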